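/- For the elementary Voigt circuit the measured impedance satisfies the exact identity Z₀(ω) = Z_V(ω) − ( Im(Z_V(ω))/(Tω) + (i/T)·Z_V′(ω) )·(1 − e^{−T/θ}), where Z_V′(ω) = −iθR/(1+iθω)². -/

import Mathlib

open Real Complex MeasureTheory intervalIntegral

set_option maxHeartbeats 4000000 in
/-- **Exact identity for the measured impedance of an elementary Voigt circuit.**
`Z₀(ω) = Z_V(ω) - (Im(Z_V(ω))/(Tω) + (i/T) Z_V'(ω)) (1 - e^{-T/θ})`,
where `Z_V(ω) = R/(1+iθω)`, `θ = RC`, and `Z_V'(ω) = -iθR/(1+iθω)²`. -/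
theorem voigt_measured_impedance_identity
    (ω : ℝ) (hω : 0 < ω) (n : ℕ) (hn : 0 < n) (T : ℝ) (hT : T = 2 * π * n / ω)
    (R C θ : ℝ) (hR : 0 < R) (hC : 0 < C) (hθ : θ = R * C)
    (U : ℝ → ℝ)
    (hU : ∀ t, U t = ∫ s in (0 : ℝ)..t, Real.sin (ω * s) * (1 / C) * Real.exp (-(t - s) / θ))
    (Z₀ ZV ZV' : ℂ)
    (hZ₀ : Z₀ = 2 * Complex.I / (T : ℂ) *
      ∫ t in (0 : ℝ)..T, (U t : ℂ) * Complex.exp (-Complex.I * ω * t))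
    (hZV : ZV = (R : ℂ) / (1 + Complex.I * θ * ω))
    (hZV' : ZV' = -Complex.I * θ * R / (1 + Complex.I * θ * ω) ^ 2) :
    Z₀ = ZV - ((ZV.im : ℂ) / ((T : ℂ) * ω) + Complex.I / (T : ℂ) * ZV') *
      (1 - Real.exp (-T / θ)) := by
  have hθ0 : 0 < θ := by rw [hθ]; positivity
  have hθne : θ ≠ 0 := ne_of_gt hθ0
  have hCne : C ≠ 0 := ne_of_gt hC
  have hωne : ω ≠ 0 := ne_of_gt hω
  have hTpos : 0 < T := by rw [hT]; positivity
  have hTne : T ≠ 0 := ne_of_gt hTpos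
  have hd0 : (1:ℝ) + θ^2*ω^2 ≠ 0 := by positivity
  have hRval : R = θ/C := by rw [hθ]; field_simp
  -- closed form for U
  have hUcf : ∀ t : ℝ, U t = θ/(C*(1+θ^2*ω^2)) *
      (Real.sin (ω*t) - θ*ω*Real.cos (ω*t) + θ*ω*Real.exp (-t/θ)) := by
    intro t
    rw [hU t]
    have key : ∀ s ∈ Set.uIcc (0:ℝ) t,
        HasDerivAt (fun s => θ/(C*(1+θ^2*ω^2)) *
          (Real.exp ((s-t)/θ) * (Real.sin (ω*s) - θ*ω*Real.cos (ω*s))))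
          (Real.sin (ω * s) * (1 / C) * Real.exp (-(t - s) / θ)) s := by
      intro s _
      have h1 : HasDerivAt (fun s : ℝ => (s - t)/θ) (1/θ) s := by
        simpa using ((hasDerivAt_id s).sub_const t).div_const θ
      have h2 := h1.exp
      have hlin : HasDerivAt (fun s : ℝ => ω * s) ω s := by
        simpa using (hasDerivAt_id s).const_mul ω
      have h3 : HasDerivAt (fun s : ℝ => Real.sin (ω*s)) (Real.cos (ω*s) * ω) s :=
        (Real.hasDerivAt_sin (ω*s)).comp s hlin
      have h4 : HasDerivAt (fun s : ℝ => Real.cos (ω*s)) (-Real.sin (ω*s) * ω) s :=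
        (Real.hasDerivAt_cos (ω*s)).comp s hlin
      have h5 := h3.sub ((h4.const_mul (θ*ω)))
      have h6 := (h2.mul h5).const_mul (θ/(C*(1+θ^2*ω^2)))
      refine h6.congr_deriv ?_
      have : -(t-s)/θ = (s-t)/θ := by ring
      rw [this, Pi.sub_apply]
      field_simp
      ring
    have hint : IntervalIntegrable
        (fun s => Real.sin (ω * s) * (1 / C) * Real.exp (-(t - s) / θ)) volume 0 t := by
      apply Continuous.intervalIntegrable
      fun_prop
    rw [intervalIntegral.integral_eq_sub_of_hasDerivAt key hint]
    simp [Real.exp_zero]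
    ring
  -- pointwise form of the integrand
  have hpt : ∀ t : ℝ, (U t : ℂ) * Complex.exp (-Complex.I * ω * t)
      = ((θ/(C*(1+θ^2*ω^2)) : ℝ) : ℂ) * ( (-Complex.I/2 - ((θ*ω : ℝ) : ℂ)/2)
        + (Complex.I/2 - ((θ*ω : ℝ) : ℂ)/2) * Complex.exp ((-2*Complex.I*ω) * t)
        + ((θ*ω : ℝ) : ℂ) * Complex.exp ((((-(1/θ) : ℝ) : ℂ) - Complex.I*ω) * t) ) := by
    intro t
    rw [hUcf t]
    have e0 : -Complex.I * (ω:ℂ) * (t:ℂ) = -(Complex.I*ω*t) := by ring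
    set v := Complex.exp (-(Complex.I*(ω:ℂ)*(t:ℂ))) with hv
    have huv : Complex.exp (Complex.I*(ω:ℂ)*(t:ℂ)) * v = 1 := by
      rw [hv, ← Complex.exp_add]; simp
    have e2 : Complex.exp ((-2*Complex.I*(ω:ℂ)) * t) = v^2 := by
      rw [show (-2*Complex.I*(ω:ℂ)) * t = -(Complex.I*ω*t) + -(Complex.I*ω*t) by ring,
        Complex.exp_add, hv]; ring
    have e3 : Complex.exp ((((-(1/θ) : ℝ) : ℂ) - Complex.I*ω) * t)
        = (Real.exp (-t/θ) : ℂ) * v := by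
      rw [show (((-(1/θ) : ℝ) : ℂ) - Complex.I*(ω:ℂ)) * t = ((-t/θ : ℝ) : ℂ) + -(Complex.I*ω*t) by
          push_cast; field_simp; ring,
        Complex.exp_add, Complex.ofReal_exp, hv]
    have esinv : (Real.sin (ω*t) : ℂ) * v = (v^2 - 1) * Complex.I / 2 := by
      rw [Complex.ofReal_sin, Complex.sin,
        show -(((ω*t : ℝ)):ℂ) * Complex.I = -(Complex.I*ω*t) by push_cast; ring,
        show (((ω*t : ℝ)):ℂ) * Complex.I = Complex.I*ω*t by push_cast; ring, ← hv]
      linear_combination (-(Complex.I)/2) * huv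
    have ecosv : (Real.cos (ω*t) : ℂ) * v = (1 + v^2) / 2 := by
      rw [Complex.ofReal_cos, Complex.cos,
        show -(((ω*t : ℝ)):ℂ) * Complex.I = -(Complex.I*ω*t) by push_cast; ring,
        show (((ω*t : ℝ)):ℂ) * Complex.I = Complex.I*ω*t by push_cast; ring, ← hv]
      linear_combination (1/2 : ℂ) * huv
    rw [e0, e2, e3]
    push_cast at esinv ecosv ⊢
    linear_combination ((θ:ℂ)/((C:ℂ)*(1+(θ:ℂ)^2*(ω:ℂ)^2))) * esinv
      - ((θ:ℂ)*(ω:ℂ)*((θ:ℂ)/((C:ℂ)*(1+(θ:ℂ)^2*(ω:ℂ)^2)))) * ecosv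
  -- the special values of the exponentials at T
  have hωT : ω * T = 2*π*n := by rw [hT]; field_simp
  have hωTc : (ω:ℂ) * (T:ℂ) = 2*(π:ℂ)*(n:ℂ) := by exact_mod_cast congrArg (Complex.ofReal) hωT
  have hexp1 : Complex.exp (-(Complex.I*(ω:ℂ)*(T:ℂ))) = 1 := by
    rw [show -(Complex.I*(ω:ℂ)*(T:ℂ)) = ((-(n:ℤ) : ℤ) : ℂ) * (2*(π:ℂ)*Complex.I) by
      push_cast; linear_combination (-Complex.I) * hωTc]
    exact Complex.exp_int_mul_two_pi_mul_I _
  have hexp2 : Complex.exp ((-2*Complex.I*(ω:ℂ)) * (T:ℂ)) = 1 := by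
    rw [show (-2*Complex.I*(ω:ℂ)) * (T:ℂ) = ((-2*(n:ℤ) : ℤ) : ℂ) * (2*(π:ℂ)*Complex.I) by
      push_cast; linear_combination (-2*Complex.I) * hωTc]
    exact Complex.exp_int_mul_two_pi_mul_I _
  have hexp3 : Complex.exp ((((-(1/θ) : ℝ) : ℂ) - Complex.I*ω) * (T:ℂ))
      = (Real.exp (-T/θ) : ℂ) := by
    rw [show (((-(1/θ) : ℝ) : ℂ) - Complex.I*(ω:ℂ)) * T = ((-T/θ : ℝ) : ℂ) + -(Complex.I*ω*T) by
        push_cast; field_simp; ring,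
      Complex.exp_add, hexp1, Complex.ofReal_exp, mul_one]
  -- nonvanishing of the exponents
  have hm2 : (-2*Complex.I*(ω:ℂ)) ≠ 0 := by
    simp [Complex.I_ne_zero, hωne]
  have hm3 : (((-(1/θ) : ℝ) : ℂ) - Complex.I*(ω:ℂ)) ≠ 0 := by
    intro h
    have := congrArg Complex.re h
    simp at this
    exact hθne (by linarith [this])
  -- the integral
  have hIntVal : (∫ t in (0 : ℝ)..T, (U t : ℂ) * Complex.exp (-Complex.I * ω * t))
      = ((θ/(C*(1+θ^2*ω^2)) : ℝ) : ℂ) * ( (-Complex.I/2 - ((θ*ω : ℝ) : ℂ)/2) * T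
        + ((θ*ω : ℝ) : ℂ) * (((Real.exp (-T/θ) : ℝ) : ℂ) - 1)
            / (((-(1/θ) : ℝ) : ℂ) - Complex.I*(ω:ℂ)) ) := by
    simp_rw [hpt]
    have i1 : IntervalIntegrable (fun _ : ℝ => (-Complex.I/2 - ((θ*ω : ℝ) : ℂ)/2))
        volume 0 T := intervalIntegrable_const
    have i2 : IntervalIntegrable
        (fun t : ℝ => (Complex.I/2 - ((θ*ω : ℝ) : ℂ)/2) * Complex.exp ((-2*Complex.I*ω) * t))
        volume 0 T := by
      apply Continuous.intervalIntegrable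
      fun_prop
    have i3 : IntervalIntegrable
        (fun t : ℝ => ((θ*ω : ℝ) : ℂ) * Complex.exp ((((-(1/θ) : ℝ) : ℂ) - Complex.I*ω) * t))
        volume 0 T := by
      apply Continuous.intervalIntegrable
      fun_prop
    rw [intervalIntegral.integral_const_mul, intervalIntegral.integral_add (i1.add i2) i3,
      intervalIntegral.integral_add i1 i2, intervalIntegral.integral_const,
      intervalIntegral.integral_const_mul, intervalIntegral.integral_const_mul,
      integral_exp_mul_complex hm2,
      integral_exp_mul_complex hm3]
    rw [hexp2, hexp3]
    rw [show ((-2*Complex.I*(ω:ℂ)) * ((0:ℝ):ℂ)) = 0 by push_cast; ring,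
      show ((((-(1/θ) : ℝ) : ℂ) - Complex.I*(ω:ℂ)) * ((0:ℝ):ℂ)) = 0 by push_cast; ring,
      Complex.exp_zero]
    simp only [sub_zero, Complex.real_smul, sub_self, zero_div, mul_zero, add_zero]
    ring
  -- real/imaginary decomposition of ZV and ZV'
  have hI2 : Complex.I^2 = -1 := Complex.I_sq
  have hI3 : Complex.I^3 = -Complex.I := by rw [pow_succ, hI2]; ring
  have hI4 : Complex.I^4 = 1 := by rw [show (4:ℕ) = 3+1 from rfl, pow_succ, hI3]; simp
  have hW0 : (1 : ℂ) + Complex.I*(θ:ℂ)*(ω:ℂ) ≠ 0 := by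
    intro h
    have := congrArg Complex.re h
    simp at this
  have hZVf : ZV = ((θ/(C*(1+θ^2*ω^2)) : ℝ) : ℂ) * (1 - Complex.I*(θ:ℂ)*(ω:ℂ)) := by
    have hd0c : ((1:ℂ) + (θ:ℂ)^2*(ω:ℂ)^2) ≠ 0 := by
      exact_mod_cast (Complex.ofReal_ne_zero.mpr hd0)
    have hCc : (C:ℂ) ≠ 0 := by exact_mod_cast hCne
    rw [hZV, hRval, div_eq_iff hW0]
    push_cast
    field_simp
    ring_nf
    simp only [hI2, hI3, hI4]
    ring
  have hZV'f : ZV' = ((θ^2/(C*(1+θ^2*ω^2)^2) : ℝ) : ℂ) *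
      (-(2*(θ:ℂ)*(ω:ℂ)) - Complex.I*(1 - (θ:ℂ)^2*(ω:ℂ)^2)) := by
    have hd0c : ((1:ℂ) + (θ:ℂ)^2*(ω:ℂ)^2) ≠ 0 := by
      exact_mod_cast (Complex.ofReal_ne_zero.mpr hd0)
    have hCc : (C:ℂ) ≠ 0 := by exact_mod_cast hCne
    rw [hZV', hRval, div_eq_iff (pow_ne_zero 2 hW0)]
    push_cast
    field_simp
    ring_nf
    simp only [hI2, hI3, hI4]
    ring
  have him : ((ZV.im : ℝ) : ℂ) = -(((θ^2*ω/(C*(1+θ^2*ω^2)) : ℝ) : ℂ)) := by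
    rw [hZVf]
    simp only [Complex.mul_im, Complex.mul_re, Complex.ofReal_re, Complex.ofReal_im,
      Complex.sub_im, Complex.sub_re, Complex.one_im, Complex.one_re,
      Complex.I_re, Complex.I_im, zero_mul, mul_zero, sub_zero, zero_sub, mul_one,
      one_mul, zero_add, add_zero]
    push_cast
    ring
  have hd0c2 : (((1+θ^2*ω^2 : ℝ)) : ℂ) ≠ 0 := Complex.ofReal_ne_zero.mpr hd0
  have hIntVal2 : (∫ t in (0 : ℝ)..T, (U t : ℂ) * Complex.exp (-Complex.I * ω * t))
      = ((θ/(C*(1+θ^2*ω^2)) : ℝ) : ℂ) * ( (-Complex.I/2 - ((θ*ω : ℝ) : ℂ)/2) * T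
        + ((θ*ω : ℝ) : ℂ) * ((θ:ℂ) * (1 - ((Real.exp (-T/θ) : ℝ) : ℂ)) * (1 - Complex.I*(θ:ℂ)*(ω:ℂ))
            / (((1+θ^2*ω^2 : ℝ)) : ℂ)) ) := by
    have hdiv : (((Real.exp (-T/θ) : ℝ) : ℂ) - 1) / (((-(1/θ) : ℝ) : ℂ) - Complex.I*(ω:ℂ))
        = (θ:ℂ) * (1 - ((Real.exp (-T/θ) : ℝ) : ℂ)) * (1 - Complex.I*(θ:ℂ)*(ω:ℂ))
            / (((1+θ^2*ω^2 : ℝ)) : ℂ) := by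
      have hθinv : (θ:ℂ) * ((θ:ℂ))⁻¹ = 1 := mul_inv_cancel₀ (by exact_mod_cast hθne)
      rw [div_eq_div_iff hm3 hd0c2]
      push_cast
      linear_combination ((1 - Complex.exp (-(T:ℂ)/(θ:ℂ)))*(1 - Complex.I*(θ:ℂ)*(ω:ℂ))) * hθinv
        + ((Complex.exp (-(T:ℂ)/(θ:ℂ)) - 1)*(θ:ℂ)^2*(ω:ℂ)^2) * Complex.I_sq
    rw [hIntVal, mul_div_assoc, hdiv]
  -- final assembly
  rw [hZ₀, hIntVal2, him, hZVf, hZV'f]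
  have hd0c : ((1:ℂ) + (θ:ℂ)^2*(ω:ℂ)^2) ≠ 0 := by
    have := Complex.ofReal_ne_zero.mpr hd0
    push_cast at this
    exact this
  have hTc : (T:ℂ) ≠ 0 := by exact_mod_cast hTne
  have hθc : (θ:ℂ) ≠ 0 := by exact_mod_cast hθne
  have hCc : (C:ℂ) ≠ 0 := by exact_mod_cast hCne
  have hωc : (ω:ℂ) ≠ 0 := by exact_mod_cast hωne
  have hns2 : Complex.normSq 2 = 4 := by norm_num [Complex.normSq_apply]
  rw [Complex.ext_iff]
  constructor <;>
    simp only [← Complex.ofReal_pow, ← Complex.ofReal_mul, Complex.add_re, Complex.add_im,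
      Complex.sub_re, Complex.sub_im, Complex.mul_re, Complex.mul_im, Complex.neg_re,
      Complex.neg_im, Complex.div_re, Complex.div_im, Complex.I_re, Complex.I_im,
      Complex.ofReal_re, Complex.ofReal_im, Complex.one_re, Complex.one_im,
      Complex.re_ofNat, Complex.im_ofNat, Complex.normSq_ofReal, hns2] <;>
    field_simp <;>
    ring
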